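/- Define Ψ_k : L_n → L_n by (Ψ_k P)_{1,i} = P_{1,i-1} and (Ψ_k P)_{2,j} = P_{2,j-k} (indices mod n). Then Ψ_k maps L_n to itself and satisfies F_n(Ψ_k(P)) = (e^{2πi/n}·z, e^{2πik/n}·w) where (z,w) = F_n(P). -/

import Mathlib

open Complex

/-- `fTri n (x₁, x₂) = sin((π/2)(x₁+x₂)) · exp((2πi/n)·(x₂/(x₁+x₂)))` for `(x₁,x₂) ≠ (0,0)`,
and `fTri n (0,0) = 0`. -/
noncomputable def fTri (n : ℕ) (p : ℝ × ℝ) : ℂ :=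
  if p = (0, 0) then 0
  else ((Real.sin (Real.pi / 2 * (p.1 + p.2)) : ℝ) : ℂ) *
    Complex.exp (2 * Real.pi * Complex.I / n * ((p.2 / (p.1 + p.2) : ℝ) : ℂ))

/-- `(i,·)` is admissible for `Y` in the group `μ`: the support of `Y (μ, ·)` is contained
in the consecutive pair `{i, i+1}` of `ℤ/nℤ`. -/
def Adm (n : ℕ) (Y : Fin 2 × ZMod n → ℝ) (μ : Fin 2) (i : ZMod n) : Prop :=
  ∀ j : ZMod n, Y (μ, j) ≠ 0 → j = i ∨ j = i + 1

/-- `L_n ⊆ ℝ^{2n}`: nonnegative points, with coordinates indexed by `{1,2} × ℤ/nℤ`,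
summing to `1`, whose support in each `μ`-group is contained in a consecutive pair mod `n`. -/
def Ln (n : ℕ) [NeZero n] : Set (Fin 2 × ZMod n → ℝ) :=
  {Y | (∀ p, 0 ≤ Y p) ∧ (∑ p, Y p) = 1 ∧ ∀ μ : Fin 2, ∃ i : ZMod n, Adm n Y μ i}

/-- The `μ`-component of `F_n` computed with the admissible index `i`:
`e^{2πi·(i/n)} · f_n(Y_{μ,i}, Y_{μ,i+1})`. -/
noncomputable def Fcomp (n : ℕ) [NeZero n] (Y : Fin 2 × ZMod n → ℝ) (μ : Fin 2)
    (i : ZMod n) : ℂ :=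
  Complex.exp (2 * Real.pi * Complex.I * ((i.val : ℂ) / n)) * fTri n (Y (μ, i), Y (μ, i + 1))

/-- The map `F_n : L_n → ℂ²`, evaluated using a choice of admissible indices
(well defined by the well-definedness statement). -/
noncomputable def Fn (n : ℕ) [NeZero n] (P : Ln n) : ℂ × ℂ :=
  (Fcomp n P.1 0 (P.2.2.2 0).choose, Fcomp n P.1 1 (P.2.2.2 1).choose)

/-- The automorphism `Ψ_k` of `ℝ^{2n}`: `(Ψ_k P)_{1,i} = P_{1,i-1}` and
`(Ψ_k P)_{2,j} = P_{2,j-k}` (indices mod `n`). -/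
def Psi (n k : ℕ) (Y : Fin 2 × ZMod n → ℝ) : Fin 2 × ZMod n → ℝ :=
  fun p => Y (p.1, p.2 - (if p.1 = 0 then 1 else (k : ZMod n)))


section Aux

lemma exp_nat_congr (n : ℕ) [NeZero n] {a b : ℕ} (h : a % n = b % n) :
    Complex.exp (2 * Real.pi * Complex.I * ((a:ℂ)/n)) =
    Complex.exp (2 * Real.pi * Complex.I * ((b:ℂ)/n)) := by
  have hn : (n:ℂ) ≠ 0 := Nat.cast_ne_zero.mpr (NeZero.ne n)
  have key : ∀ c : ℕ, Complex.exp (2*Real.pi*Complex.I*((c:ℂ)/n)) =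
      Complex.exp (2*Real.pi*Complex.I*(((c % n : ℕ):ℂ)/n)) := by
    intro c
    conv_lhs => rw [← Nat.mod_add_div c n]
    push_cast
    rw [show 2*Real.pi*Complex.I*((((c % n : ℕ):ℂ) + n*((c/n : ℕ):ℂ))/n) =
        2*Real.pi*Complex.I*(((c % n : ℕ):ℂ)/n) + ((c/n : ℕ):ℂ)*(2*Real.pi*Complex.I) by
      field_simp]
    rw [Complex.exp_add, Complex.exp_nat_mul, Complex.exp_two_pi_mul_I, one_pow, mul_one]
  rw [key a, key b, h]

lemma exp_nat_add (n : ℕ) [NeZero n] (a b : ℕ) :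
    Complex.exp (2 * Real.pi * Complex.I * (((a+b:ℕ):ℂ)/n)) =
    Complex.exp (2 * Real.pi * Complex.I * ((a:ℂ)/n)) *
    Complex.exp (2 * Real.pi * Complex.I * ((b:ℂ)/n)) := by
  rw [← Complex.exp_add]
  congr 1
  push_cast
  ring

lemma fTri_left {n : ℕ} {t : ℝ} (ht : t ≠ 0) :
    fTri n (t, 0) = ((Real.sin (Real.pi / 2 * t) : ℝ) : ℂ) := by
  have h : (t, (0:ℝ)) ≠ (0, 0) := by simp [ht]
  simp only [fTri, h, if_false, add_zero, zero_div, Complex.ofReal_zero, mul_zero,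
    Complex.exp_zero, mul_one]

lemma fTri_right {n : ℕ} {t : ℝ} (ht : t ≠ 0) :
    fTri n (0, t) = ((Real.sin (Real.pi / 2 * t) : ℝ) : ℂ) *
      Complex.exp (2 * Real.pi * Complex.I * ((1:ℂ)/n)) := by
  have h : ((0:ℝ), t) ≠ (0, 0) := by simp [ht]
  simp only [fTri, h, if_false, zero_add, div_self ht, Complex.ofReal_one, mul_one]
  congr 1
  ring

lemma Fcomp_zero (n : ℕ) [NeZero n] (Y : Fin 2 × ZMod n → ℝ) (μ : Fin 2) (i : ZMod n)
    (h1 : Y (μ, i) = 0) (h2 : Y (μ, i + 1) = 0) : Fcomp n Y μ i = 0 := by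
  simp [Fcomp, h1, h2, fTri]

lemma Fcomp_single_left (n : ℕ) [NeZero n] (Y : Fin 2 × ZMod n → ℝ) (μ : Fin 2) (i : ZMod n)
    (ht : Y (μ, i) ≠ 0) (h2 : Y (μ, i + 1) = 0) :
    Fcomp n Y μ i = Complex.exp (2 * Real.pi * Complex.I * ((i.val : ℂ) / n)) *
      ((Real.sin (Real.pi / 2 * Y (μ, i)) : ℝ) : ℂ) := by
  rw [Fcomp, h2, fTri_left ht]

lemma Fcomp_single_right (n : ℕ) [NeZero n] (Y : Fin 2 × ZMod n → ℝ) (μ : Fin 2) (i : ZMod n)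
    (h1 : Y (μ, i) = 0) (ht : Y (μ, i + 1) ≠ 0) :
    Fcomp n Y μ i = Complex.exp (2 * Real.pi * Complex.I * (((i.val + 1 : ℕ) : ℂ) / n)) *
      ((Real.sin (Real.pi / 2 * Y (μ, i + 1)) : ℝ) : ℂ) := by
  rw [Fcomp, h1, fTri_right ht, exp_nat_add]
  push_cast
  ring

lemma Fcomp_welldef (n : ℕ) [NeZero n] (hn : 3 ≤ n) (Y : Fin 2 × ZMod n → ℝ) (μ : Fin 2)
    {i i' : ZMod n} (hi : Adm n Y μ i) (hi' : Adm n Y μ i') :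
    Fcomp n Y μ i = Fcomp n Y μ i' := by
  haveI : Fact (1 < n) := ⟨by omega⟩
  have h1 : (1 : ZMod n) ≠ 0 := by
    intro h
    have : ((1:ℕ) : ZMod n) = 0 := by exact_mod_cast h
    rw [ZMod.natCast_eq_zero_iff] at this
    have := Nat.le_of_dvd one_pos this
    omega
  have h2 : (2 : ZMod n) ≠ 0 := by
    intro h
    have : ((2:ℕ) : ZMod n) = 0 := by exact_mod_cast h
    rw [ZMod.natCast_eq_zero_iff] at this
    have := Nat.le_of_dvd (by norm_num) this
    omega
  by_cases hz : ∀ j, Y (μ, j) = 0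
  · rw [Fcomp_zero n Y μ i (hz i) (hz (i+1)), Fcomp_zero n Y μ i' (hz i') (hz (i'+1))]
  push_neg at hz
  obtain ⟨j, hj⟩ := hz
  by_cases hbi : Y (μ, i) ≠ 0 ∧ Y (μ, i + 1) ≠ 0
  · rcases hi' i hbi.1 with h | h
    · rw [h]
    · exfalso
      rcases hi' (i+1) hbi.2 with h' | h'
      · exact h2 (by linear_combination h' - h)
      · exact h1 (by linear_combination h' - h)
  by_cases hbi' : Y (μ, i') ≠ 0 ∧ Y (μ, i' + 1) ≠ 0
  · rcases hi i' hbi'.1 with h | h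
    · rw [h]
    · exfalso
      rcases hi (i'+1) hbi'.2 with h' | h'
      · exact h2 (by linear_combination h' - h)
      · exact h1 (by linear_combination h' - h)
  push_neg at hbi hbi'
  rcases hi j hj with hji | hji <;> rcases hi' j hj with hji' | hji'
  · rw [hji] at hji'; rw [hji']
  · -- j = i and j = i' + 1
    have heq : i = i' + 1 := by rw [← hji, hji']
    have hYi : Y (μ, i) ≠ 0 := by rw [← hji]; exact hj
    have hYi1 : Y (μ, i + 1) = 0 := hbi hYi
    have hYi' : Y (μ, i') = 0 := by
      by_contra h
      rcases hi i' h with he | he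
      · exact h1 (by linear_combination -heq - he)
      · exact h2 (by linear_combination -heq - he)
    have hYi'1 : Y (μ, i' + 1) ≠ 0 := by rw [← hji']; exact hj
    rw [Fcomp_single_left n Y μ i hYi hYi1, Fcomp_single_right n Y μ i' hYi' hYi'1]
    have hval : i.val % n = (i'.val + 1) % n := by
      rw [heq, ZMod.val_add, ZMod.val_one, Nat.mod_mod_of_dvd _ dvd_rfl]
    rw [exp_nat_congr n hval, show Y (μ, i) = Y (μ, i' + 1) from by rw [← hji, hji']]
  · -- j = i + 1 and j = i'
    have heq : i' = i + 1 := by rw [← hji', hji]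
    have hYi'0 : Y (μ, i') ≠ 0 := by rw [← hji']; exact hj
    have hYi'1 : Y (μ, i' + 1) = 0 := hbi' hYi'0
    have hYi : Y (μ, i) = 0 := by
      by_contra h
      rcases hi' i h with he | he
      · exact h1 (by linear_combination -heq - he)
      · exact h2 (by linear_combination -heq - he)
    have hYi1 : Y (μ, i + 1) ≠ 0 := by rw [← hji]; exact hj
    rw [Fcomp_single_right n Y μ i hYi hYi1, Fcomp_single_left n Y μ i' hYi'0 hYi'1]
    have hval : (i.val + 1) % n = i'.val % n := by
      rw [heq, ZMod.val_add, ZMod.val_one, Nat.mod_mod_of_dvd _ dvd_rfl]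
    rw [exp_nat_congr n hval, show Y (μ, i + 1) = Y (μ, i') from by rw [← hji, hji']]
  · have h : i + 1 = i' + 1 := by rw [← hji, hji']
    rw [add_right_cancel h]

end Aux


def shN (k : ℕ) (μ : Fin 2) : ℕ := if μ = 0 then 1 else k

lemma psi_apply (n k : ℕ) (Y : Fin 2 × ZMod n → ℝ) (μ : Fin 2) (j : ZMod n) :
    Psi n k Y (μ, j) = Y (μ, j - ((shN k μ : ℕ) : ZMod n)) := by
  by_cases hμ : μ = 0 <;> simp [Psi, shN, hμ]

lemma adm_psi (n k : ℕ) [NeZero n] {Y : Fin 2 × ZMod n → ℝ} {μ : Fin 2} {i : ZMod n}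
    (h : Adm n Y μ i) : Adm n (Psi n k Y) μ (i + ((shN k μ : ℕ) : ZMod n)) := by
  intro j hj
  rw [psi_apply] at hj
  rcases h _ hj with he | he
  · left
    rw [sub_eq_iff_eq_add] at he
    exact he
  · right
    rw [sub_eq_iff_eq_add] at he
    rw [he]; ring

lemma Fcomp_psi (n k : ℕ) [NeZero n] (Y : Fin 2 × ZMod n → ℝ) (μ : Fin 2) (i : ZMod n) :
    Fcomp n (Psi n k Y) μ (i + ((shN k μ : ℕ) : ZMod n)) =
      Complex.exp (2 * Real.pi * Complex.I * (((shN k μ : ℕ) : ℂ)/n)) * Fcomp n Y μ i := by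
  unfold Fcomp
  have e1 : Psi n k Y (μ, i + ((shN k μ : ℕ) : ZMod n)) = Y (μ, i) := by
    rw [psi_apply, add_sub_cancel_right]
  have e2 : Psi n k Y (μ, i + ((shN k μ : ℕ) : ZMod n) + 1) = Y (μ, i + 1) := by
    rw [psi_apply]
    have : i + ((shN k μ : ℕ) : ZMod n) + 1 - ((shN k μ : ℕ) : ZMod n) = i + 1 := by ring
    rw [this]
  rw [e1, e2]
  have hval : (i + ((shN k μ : ℕ) : ZMod n)).val % n = (i.val + shN k μ) % n := by
    rw [ZMod.val_add, ZMod.val_natCast, Nat.mod_mod_of_dvd _ dvd_rfl]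
    simp [Nat.add_mod]
  rw [exp_nat_congr n hval, exp_nat_add]
  ring

def shEquiv (n k : ℕ) [NeZero n] : (Fin 2 × ZMod n) ≃ (Fin 2 × ZMod n) where
  toFun p := (p.1, p.2 - (if p.1 = 0 then 1 else (k : ZMod n)))
  invFun p := (p.1, p.2 + (if p.1 = 0 then 1 else (k : ZMod n)))
  left_inv p := by simp
  right_inv p := by simp

lemma psi_mem (n k : ℕ) [NeZero n] {Y : Fin 2 × ZMod n → ℝ} (h : Y ∈ Ln n) :
    Psi n k Y ∈ Ln n := by
  obtain ⟨hpos, hsum, hadm⟩ := h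
  refine ⟨fun p => hpos _, ?_, ?_⟩
  · calc (∑ p, Psi n k Y p) = ∑ p, Y (shEquiv n k p) := rfl
      _ = ∑ p, Y p := Equiv.sum_comp (shEquiv n k) Y
      _ = 1 := hsum
  · intro μ
    exact ⟨(hadm μ).choose + ((shN k μ : ℕ) : ZMod n), adm_psi n k (hadm μ).choose_spec⟩

/-- `Ψ_k` maps `L_n` to itself and satisfies
`F_n(Ψ_k(P)) = (e^{2πi/n}·z, e^{2πik/n}·w)` where `(z,w) = F_n(P)`. -/
theorem Psi_equivariant (n k : ℕ) [NeZero n] (hn : 3 ≤ n) (hk : Nat.Coprime k n) :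
    ∀ P : Ln n, ∃ h : Psi n k P.1 ∈ Ln n,
      Fn n ⟨Psi n k P.1, h⟩ =
        (Complex.exp (2 * Real.pi * Complex.I / n) * (Fn n P).1,
         Complex.exp (2 * Real.pi * Complex.I * k / n) * (Fn n P).2) := by
  intro P
  obtain ⟨Y, hY⟩ := P
  have hmem := psi_mem n k hY
  refine ⟨hmem, ?_⟩
  have hadm := hY.2.2
  have key : ∀ μ : Fin 2,
      Fcomp n (Psi n k Y) μ ((hmem.2.2 μ).choose) =
        Complex.exp (2 * Real.pi * Complex.I * (((shN k μ : ℕ) : ℂ)/n)) *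
          Fcomp n Y μ ((hadm μ).choose) := by
    intro μ
    rw [Fcomp_welldef n hn (Psi n k Y) μ ((hmem.2.2 μ).choose_spec)
      (adm_psi n k (hadm μ).choose_spec), Fcomp_psi]
  have k0 := key 0
  have k1 := key 1
  simp [shN] at k0 k1
  refine Prod.ext ?_ ?_
  · show Fcomp n (Psi n k Y) 0 _ = _
    rw [k0]
    congr 2 <;> ring
  · show Fcomp n (Psi n k Y) 1 _ = _
    rw [k1]
    congr 2 <;> ring
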